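/- Let p_1, …, p_{n+1} be an affinely independent family of points in ℝⁿ and let ϖ_1, …, ϖ_{n+1} be the unique reals with Σ_j ϖ_j = 1 and q = Σ_j ϖ_j p_j for a given point q ∈ ℝⁿ. Suppose r_1(t), …, r_{n+1}(t) ∈ ℝⁿ satisfy r_j(t) → p_j as t → ∞, a target trajectory q(t) ∈ ℝⁿ satisfies q(t) → q as t → ∞, and for every t, w_1(t), …, w_{n+1}(t) are reals with Σ_j w_j(t) = 1 and Σ_j w_j(t) r_j(t) = q(t). Then w_j(t) → ϖ_j as t → ∞ for every j. -/

import Mathlib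

open Filter Topology
open Matrix

set_option maxHeartbeats 1000000

/-- **Convergence of communication weights to the desired weights.**
Let `p 0, …, p n` be affinely independent in `ℝⁿ` and `ϖ` the (unique) weights with
`∑ ϖ j = 1` and `q = ∑ ϖ j • p j`. If `r t j → p j`, `qt t → q`, and for every `t`
the weights `w t` satisfy `∑ w t j = 1` and `∑ w t j • r t j = qt t`, then
`w t j → ϖ j` for every `j`. -/
theorem weights_tendsto_desired
    (n : ℕ) (p : Fin (n + 1) → EuclideanSpace ℝ (Fin n))
    (hp : AffineIndependent ℝ p)
    (q : EuclideanSpace ℝ (Fin n)) (ϖ : Fin (n + 1) → ℝ)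
    (hϖ_sum : ∑ j, ϖ j = 1) (hϖ : q = ∑ j, ϖ j • p j)
    (r : ℝ → Fin (n + 1) → EuclideanSpace ℝ (Fin n))
    (hr : ∀ j, Tendsto (fun t => r t j) atTop (𝓝 (p j)))
    (qt : ℝ → EuclideanSpace ℝ (Fin n))
    (hqt : Tendsto qt atTop (𝓝 q))
    (w : ℝ → Fin (n + 1) → ℝ)
    (hw_sum : ∀ t, ∑ j, w t j = 1)
    (hw : ∀ t, ∑ j, w t j • r t j = qt t) :
    ∀ j, Tendsto (fun t => w t j) atTop (𝓝 (ϖ j)) := by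
  classical
  set M : Matrix (Fin (n+1)) (Fin (n+1)) ℝ :=
    Matrix.of fun i j => Fin.cons (α := fun _ => ℝ) (1:ℝ) (fun i' => p j i') i with hMdef
  set Mt : ℝ → Matrix (Fin (n+1)) (Fin (n+1)) ℝ :=
    fun t => Matrix.of fun i j => Fin.cons (α := fun _ => ℝ) (1:ℝ) (fun i' => r t j i') i with hMtdef
  set b : Fin (n+1) → ℝ := Fin.cons (α := fun _ => ℝ) 1 (fun i => q i) with hbdef
  set bt : ℝ → Fin (n+1) → ℝ := fun t => Fin.cons (α := fun _ => ℝ) 1 (fun i => qt t i) with hbtdef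
  -- mulVec formula
  have hmv : ∀ (v : Fin (n+1) → ℝ), M *ᵥ v =
      Fin.cons (α := fun _ => ℝ) (∑ j, v j) (fun i' => ∑ j, v j * p j i') := by
    intro v
    funext i
    refine Fin.cases ?_ ?_ i <;> simp [M, Matrix.mulVec, dotProduct, mul_comm]
  have hmvt : ∀ t (v : Fin (n+1) → ℝ), Mt t *ᵥ v =
      Fin.cons (α := fun _ => ℝ) (∑ j, v j) (fun i' => ∑ j, v j * r t j i') := by
    intro t v
    funext i
    refine Fin.cases ?_ ?_ i <;> simp [Mt, Matrix.mulVec, dotProduct, mul_comm]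
  -- M is invertible
  have hMunit : IsUnit M := by
    rw [← Matrix.mulVec_injective_iff_isUnit]
    intro v₁ v₂ hv
    have h0 : M *ᵥ (v₁ - v₂) = 0 := by
      rw [Matrix.mulVec_sub, hv, sub_self]
    rw [hmv] at h0
    have hs : ∑ j, (v₁ - v₂) j = 0 := by
      have := congrFun h0 0; simpa using this
    have hsp : ∑ j, (v₁ - v₂) j • p j = 0 := by
      ext i'
      have h := congrFun h0 i'.succ
      simp only [Fin.cons_succ] at h
      have heq : (∑ j, (v₁ - v₂) j • p j) i' = ∑ j, (v₁ - v₂) j * p j i' := by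
        have hm := map_sum (EuclideanSpace.proj (𝕜 := ℝ) i') (fun j => (v₁ - v₂) j • p j)
          Finset.univ
        simp only [PiLp.proj_apply, PiLp.smul_apply, smul_eq_mul] at hm
        exact hm
      rw [heq]
      simpa using h
    have := affineIndependent_iff.mp hp Finset.univ (v₁ - v₂) (by simpa using hs)
      (by simpa using hsp)
    funext j
    have hj := this j (Finset.mem_univ j)
    simpa [sub_eq_zero] using hj
  have hdet : M.det ≠ 0 := by
    simpa [Matrix.isUnit_iff_isUnit_det, isUnit_iff_ne_zero] using hMunit
  -- M *ᵥ ϖ = b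
  have hMϖ : M *ᵥ ϖ = b := by
    rw [hmv, hbdef]
    funext i
    refine Fin.cases ?_ ?_ i
    · simpa using hϖ_sum
    · intro i'
      have hq : q i' = ∑ j, ϖ j * p j i' := by
        have hm := map_sum (EuclideanSpace.proj (𝕜 := ℝ) i') (fun j => ϖ j • p j) Finset.univ
        simp only [PiLp.proj_apply, PiLp.smul_apply, smul_eq_mul] at hm
        rw [hϖ]
        exact hm
      simp [hq]
  -- convergence of Mt to M
  have hMt : Tendsto Mt atTop (𝓝 M) := by
    apply tendsto_pi_nhds.mpr
    intro i
    apply tendsto_pi_nhds.mpr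
    intro j
    refine Fin.cases ?_ ?_ i
    · simp [Mt, M]
    · intro i'
      have : Tendsto (fun t => r t j i') atTop (𝓝 (p j i')) := by
        have hc := (EuclideanSpace.proj (𝕜 := ℝ) i').continuous.tendsto (p j)
        simpa [Function.comp_def] using hc.comp (hr j)
      simpa [Mt, M] using this
  have hbt : Tendsto bt atTop (𝓝 b) := by
    rw [tendsto_pi_nhds]
    intro i
    refine Fin.cases ?_ ?_ i
    · simp [bt, b]
    · intro i'
      have hc := (EuclideanSpace.proj (𝕜 := ℝ) i').continuous.tendsto q
      simpa [bt, b, Function.comp_def] using hc.comp hqt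
  -- continuity pieces
  have hdet_t : Tendsto (fun t => (Mt t).det) atTop (𝓝 M.det) :=
    ((Continuous.matrix_det continuous_id).tendsto M).comp hMt
  have hadj_t : Tendsto (fun t => (Mt t).adjugate) atTop (𝓝 M.adjugate) :=
    ((Continuous.matrix_adjugate continuous_id).tendsto M).comp hMt
  have hinvdet_t : Tendsto (fun t => ((Mt t).det)⁻¹) atTop (𝓝 (M.det)⁻¹) :=
    hdet_t.inv₀ hdet
  have hadjv : Tendsto (fun t => (Mt t).adjugate *ᵥ bt t) atTop (𝓝 (M.adjugate *ᵥ b)) := by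
    rw [tendsto_pi_nhds]
    intro i
    have h1 : ∀ j : Fin (n+1), Tendsto (fun t => (Mt t).adjugate i j * bt t j) atTop
        (𝓝 (M.adjugate i j * b j)) := by
      intro j
      have ha : Tendsto (fun t => (Mt t).adjugate i j) atTop (𝓝 (M.adjugate i j)) :=
        ((continuous_apply_apply i j).tendsto _).comp hadj_t
      have hb2 : Tendsto (fun t => bt t j) atTop (𝓝 (b j)) :=
        ((continuous_apply j).tendsto _).comp hbt
      exact ha.mul hb2
    have := tendsto_finset_sum Finset.univ (fun j _ => h1 j)
    simpa [Matrix.mulVec, dotProduct] using this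
  have hg : Tendsto (fun t => ((Mt t).det)⁻¹ • ((Mt t).adjugate *ᵥ bt t)) atTop
      (𝓝 ((M.det)⁻¹ • (M.adjugate *ᵥ b))) := hinvdet_t.smul hadjv
  -- identify limit with ϖ
  have hinv : M⁻¹ = (M.det)⁻¹ • M.adjugate := by
    rw [Matrix.inv_def, Ring.inverse_eq_inv']
  have hlim : (M.det)⁻¹ • (M.adjugate *ᵥ b) = ϖ := by
    rw [← Matrix.smul_mulVec, ← hinv, ← hMϖ, Matrix.mulVec_mulVec,
      Matrix.nonsing_inv_mul M (isUnit_iff_ne_zero.mpr hdet), Matrix.one_mulVec]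
  -- eventual equality of w with the explicit formula
  have hdet_ev : ∀ᶠ t in atTop, (Mt t).det ≠ 0 := hdet_t.eventually_ne hdet
  have hweq : ∀ᶠ t in atTop, w t = ((Mt t).det)⁻¹ • ((Mt t).adjugate *ᵥ bt t) := by
    filter_upwards [hdet_ev] with t ht
    have hMtw : Mt t *ᵥ w t = bt t := by
      rw [hmvt]
      funext i
      refine Fin.cases ?_ ?_ i
      · simpa [bt] using hw_sum t
      · intro i'
        have hm := map_sum (EuclideanSpace.proj (𝕜 := ℝ) i') (fun j => w t j • r t j)
          Finset.univ
        simp only [PiLp.proj_apply, PiLp.smul_apply, smul_eq_mul] at hm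
        have hq := congrArg (fun x : EuclideanSpace ℝ (Fin n) => x i') (hw t)
        simp only at hq
        simp [bt, ← hm, hq]
    have hwform : w t = (Mt t)⁻¹ *ᵥ bt t := by
      rw [← hMtw, Matrix.mulVec_mulVec,
        Matrix.nonsing_inv_mul _ (isUnit_iff_ne_zero.mpr ht), Matrix.one_mulVec]
    rw [hwform, Matrix.inv_def, Ring.inverse_eq_inv', Matrix.smul_mulVec]
  have hwt : Tendsto w atTop (𝓝 ϖ) :=
    Tendsto.congr' (hweq.mono fun t ht => ht.symm) (hlim ▸ hg)
  intro j
  exact ((continuous_apply j).tendsto ϖ).comp hwt
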